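/- For every r ≥ 1 and m ≠ n, the coefficient (u_n^{(r)})_m admits an expansion as a sum over paths of length r from m to n: (u_n^{(r)})_m = Σ_{γ: m→n, |γ|=r} g(γ, D) B_γ, where for an irreducible path γ = (n_0,...,n_r) (one with n_j ≠ n for 0 ≤ j ≤ r−1) the coefficient is g(γ, D) = Π_{j=0}^{r-1} 1/(D_n − D_{n_j}). -/

import Mathlib

open Finset

set_option linter.unusedSectionVars false

namespace RSPE

open Fin.NatCast

variable {S : Type*} [Fintype S] [DecidableEq S]

def pw (B : Matrix S S ℂ) {r : ℕ} (γ : Fin (r + 1) → S) : ℂ :=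
  ∏ i : Fin r, B (γ i.castSucc) (γ i.succ)

noncomputable def gI (D : S → ℂ) (n : S) {r : ℕ} (γ : Fin (r + 1) → S) : ℂ :=
  ∏ j : Fin (r + 1), if j ≠ Fin.last r then (D n - D (γ j))⁻¹ else 1

lemma natCast_castSucc {r : ℕ} (i : Fin r) : ((i : ℕ) : Fin (r + 1)) = i.castSucc := by
  ext
  rw [Fin.val_natCast, Nat.mod_eq_of_lt (by omega)]
  rfl

lemma natCast_succ {r : ℕ} (i : Fin r) : (((i : ℕ) + 1 : ℕ) : Fin (r + 1)) = i.succ := by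
  ext
  rw [Fin.val_natCast, Nat.mod_eq_of_lt (by omega)]
  rfl

lemma natCast_last (c : ℕ) : ((c : ℕ) : Fin (c + 1)) = Fin.last c := by
  ext
  rw [Fin.val_natCast, Nat.mod_eq_of_lt (by omega)]
  rfl

lemma pw_eq_range (B : Matrix S S ℂ) {r : ℕ} (γ : Fin (r + 1) → S) :
    pw B γ = ∏ i ∈ Finset.range r, B (γ (i : Fin (r + 1))) (γ ((i + 1 : ℕ) : Fin (r + 1))) := by
  rw [← Fin.prod_univ_eq_prod_range (fun i : ℕ => B (γ (i : Fin (r + 1))) (γ ((i + 1 : ℕ) : Fin (r + 1)))) r]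
  exact Finset.prod_congr rfl fun i _ => by rw [natCast_castSucc, natCast_succ]

def glue {a b : ℕ} (ε : Fin (a + 1) → S) (δ : Fin (b + 1) → S) : Fin (a + b + 1) → S :=
  fun j => if (j : ℕ) ≤ a then ε ((j : ℕ) : Fin (a + 1)) else δ (((j : ℕ) - a : ℕ) : Fin (b + 1))

lemma glue_natCast_le {a b : ℕ} (ε : Fin (a + 1) → S) (δ : Fin (b + 1) → S) {i : ℕ}
    (h : i ≤ a) : glue ε δ (i : Fin (a + b + 1)) = ε (i : Fin (a + 1)) := by
  have hv : (((i : ℕ) : Fin (a + b + 1)) : ℕ) = i := by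
    rw [Fin.val_natCast]; exact Nat.mod_eq_of_lt (by omega)
  simp only [glue, hv, if_pos h]

lemma glue_natCast_gt {a b : ℕ} (ε : Fin (a + 1) → S) (δ : Fin (b + 1) → S) {i : ℕ}
    (h : a < i) (h2 : i ≤ a + b) :
    glue ε δ (i : Fin (a + b + 1)) = δ ((i - a : ℕ) : Fin (b + 1)) := by
  have hv : (((i : ℕ) : Fin (a + b + 1)) : ℕ) = i := by
    rw [Fin.val_natCast]; exact Nat.mod_eq_of_lt (by omega)
  simp only [glue, hv]
  rw [if_neg (by omega)]

lemma glue_zero {a b : ℕ} (ε : Fin (a + 1) → S) (δ : Fin (b + 1) → S) :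
    glue ε δ 0 = ε 0 := by
  have := glue_natCast_le ε δ (i := 0) (Nat.zero_le a)
  simpa using this

lemma glue_last {a b : ℕ} (ε : Fin (a + 1) → S) (δ : Fin (b + 1) → S) (hb : 1 ≤ b) :
    glue ε δ (Fin.last (a + b)) = δ (Fin.last b) := by
  have h1 : ((a + b : ℕ) : Fin (a + b + 1)) = Fin.last (a + b) := natCast_last _
  rw [← h1, glue_natCast_gt ε δ (by omega) le_rfl, show a + b - a = b from by omega,
    natCast_last]

lemma glue_mid {a b : ℕ} (ε : Fin (a + 1) → S) (δ : Fin (b + 1) → S) :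
    glue ε δ ((a : ℕ) : Fin (a + b + 1)) = ε (Fin.last a) := by
  rw [glue_natCast_le ε δ le_rfl, natCast_last]

lemma mid_ne_last {a b : ℕ} (hb : 1 ≤ b) :
    ((a : ℕ) : Fin (a + b + 1)) ≠ Fin.last (a + b) := by
  have hv : (((a : ℕ) : Fin (a + b + 1)) : ℕ) = a := by
    rw [Fin.val_natCast]; exact Nat.mod_eq_of_lt (by omega)
  intro h
  rw [h, Fin.val_last] at hv
  omega

lemma pw_glue (B : Matrix S S ℂ) {a b : ℕ} (ε : Fin (a + 1) → S) (δ : Fin (b + 1) → S)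
    (hc : ε (Fin.last a) = δ 0) : pw B (glue ε δ) = pw B ε * pw B δ := by
  rw [pw_eq_range, pw_eq_range, pw_eq_range, Finset.prod_range_add]
  congr 1
  · refine Finset.prod_congr rfl fun i hi => ?_
    rw [Finset.mem_range] at hi
    rw [glue_natCast_le ε δ (by omega), glue_natCast_le ε δ (by omega)]
  · refine Finset.prod_congr rfl fun i hi => ?_
    rw [Finset.mem_range] at hi
    have h2 : glue ε δ ((a + i + 1 : ℕ) : Fin (a + b + 1)) = δ ((i + 1 : ℕ) : Fin (b + 1)) := by
      rw [glue_natCast_gt ε δ (by omega) (by omega), show a + i + 1 - a = i + 1 from by omega]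
    rcases Nat.eq_zero_or_pos i with hi0 | hi0
    · subst hi0
      rw [show a + 0 = a from rfl, glue_mid, hc]
      rw [show ((a : ℕ) + 0 + 1 : ℕ) = a + 0 + 1 from rfl] at h2
      rw [h2]
      norm_num
    · rw [glue_natCast_gt ε δ (by omega) (by omega), show a + i - a = i from by omega, h2]

lemma pw_cons (B : Matrix S S ℂ) {b : ℕ} (x : S) (δ : Fin (b + 1) → S) :
    pw B (Fin.cons x δ) = B x (δ 0) * pw B δ := by
  simp only [pw, Fin.prod_univ_succ, Fin.castSucc_zero, Fin.cons_zero, Fin.cons_succ,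
    ← Fin.succ_castSucc]

lemma gI_cons (D : S → ℂ) (n : S) {b : ℕ} (x : S) (δ : Fin (b + 1) → S) :
    gI D n (Fin.cons x δ) = (D n - D x)⁻¹ * gI D n δ := by
  rw [gI, gI, Fin.prod_univ_succ]
  have h0 : (0 : Fin (b + 2)) ≠ Fin.last (b + 1) := by
    intro h
    have := congrArg Fin.val h
    simp at this
  rw [if_pos h0, Fin.cons_zero]
  congr 1
  refine Finset.prod_congr rfl fun j _ => ?_
  simp only [ne_eq, Fin.cons_succ, ← Fin.succ_last, Fin.succ_inj]

lemma cons_last' {b : ℕ} (x : S) (δ : Fin (b + 1) → S) :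
    (Fin.cons x δ : Fin (b + 2) → S) (Fin.last (b + 1)) = δ (Fin.last b) := by
  rw [← Fin.succ_last, Fin.cons_succ]

lemma irr_cons_iff {n : S} {b : ℕ} {x : S} (hx : x ≠ n) (δ : Fin (b + 1) → S) :
    (∀ j : Fin (b + 2), j ≠ Fin.last (b + 1) → (Fin.cons x δ : Fin (b + 2) → S) j ≠ n) ↔
      (∀ j : Fin (b + 1), j ≠ Fin.last b → δ j ≠ n) := by
  constructor
  · intro h j hj
    have hne : j.succ ≠ Fin.last (b + 1) := by
      rw [← Fin.succ_last]
      exact (Fin.succ_injective _).ne hj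
    simpa [Fin.cons_succ] using h j.succ hne
  · intro h j hj
    induction j using Fin.cases with
    | zero => simpa using hx
    | succ i =>
      rw [Fin.cons_succ]
      refine h i fun c => hj ?_
      rw [c, Fin.succ_last]

lemma sum_cons_eq {k : ℕ} (F : (Fin (k + 1) → S) → ℂ) :
    ∑ γ : Fin (k + 1) → S, F γ = ∑ x : S, ∑ δ : Fin k → S, F (Fin.cons x δ) := by
  rw [← Equiv.sum_comp (Fin.consEquiv fun _ : Fin (k + 1) => S) F]
  exact Fintype.sum_prod_type (f := fun p : S × (Fin k → S) => F (Fin.cons p.1 p.2))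
noncomputable def Ival (D : S → ℂ) (B : Matrix S S ℂ) (n : S) (r : ℕ) (m : S) : ℂ :=
  ∑ γ : Fin (r + 1) → S,
    if γ 0 = m ∧ γ (Fin.last r) = n ∧ ∀ j, j ≠ Fin.last r → γ j ≠ n then
      gI D n γ * pw B γ else 0

def PathSet (n : S) (r : ℕ) (m : S) : Set (Fin (r + 1) → S) :=
  {γ | γ 0 = m ∧ γ (Fin.last r) = n}

def NIrrSet (n : S) (r : ℕ) (m : S) : Set (Fin (r + 1) → S) :=
  {γ | γ 0 = m ∧ γ (Fin.last r) = n ∧ ∃ j, j ≠ Fin.last r ∧ γ j = n}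

lemma NIrrSet_subset_PathSet (n : S) (r : ℕ) (m : S) : NIrrSet n r m ⊆ PathSet n r m :=
  fun γ hγ => ⟨hγ.1, hγ.2.1⟩

lemma mul_mem_span_mul {A C : Set ℂ} {x y : ℂ} (hx : x ∈ Submodule.span ℂ A)
    (hy : y ∈ Submodule.span ℂ C) :
    x * y ∈ Submodule.span ℂ {z | ∃ a ∈ A, ∃ c ∈ C, z = a * c} := by
  induction hx using Submodule.span_induction with
  | mem a ha =>
    induction hy using Submodule.span_induction with
    | mem c hc => exact Submodule.subset_span ⟨a, ha, c, hc, rfl⟩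
    | zero => rw [mul_zero]; exact Submodule.zero_mem _
    | add y z _ _ hy hz => rw [mul_add]; exact Submodule.add_mem _ hy hz
    | smul t y _ hy =>
      rw [smul_eq_mul, mul_left_comm, ← smul_eq_mul]
      exact Submodule.smul_mem _ t hy
  | zero => rw [zero_mul]; exact Submodule.zero_mem _
  | add x z _ _ hx hz => rw [add_mul]; exact Submodule.add_mem _ hx hz
  | smul t x _ hx =>
    rw [smul_eq_mul, mul_assoc, ← smul_eq_mul]
    exact Submodule.smul_mem _ t hx

lemma edge_mul_mem_span (B : Matrix S S ℂ) {b : ℕ} (x ℓ : S) {P : Set (Fin (b + 1) → S)}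
    {y : ℂ} (hy : y ∈ Submodule.span ℂ (pw B '' P)) (hP : ∀ δ ∈ P, δ 0 = ℓ) :
    B x ℓ * y ∈ Submodule.span ℂ (pw B '' ((fun δ => (Fin.cons x δ : Fin (b + 2) → S)) '' P)) := by
  induction hy using Submodule.span_induction with
  | mem z hz =>
    obtain ⟨δ, hδ, rfl⟩ := hz
    have : B x ℓ * pw B δ = pw B (Fin.cons x δ) := by rw [pw_cons, hP δ hδ]
    rw [this]
    exact Submodule.subset_span ⟨Fin.cons x δ, ⟨δ, hδ, rfl⟩, rfl⟩
  | zero => rw [mul_zero]; exact Submodule.zero_mem _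
  | add y z _ _ hy hz => rw [mul_add]; exact Submodule.add_mem _ hy hz
  | smul t y _ hy =>
    rw [smul_eq_mul, mul_left_comm, ← smul_eq_mul]
    exact Submodule.smul_mem _ t hy

lemma span_coeff {ι : Type*} [Fintype ι] [DecidableEq ι] (w : ι → ℂ) (P : ι → Prop)
    [DecidablePred P] {x : ℂ} (hx : x ∈ Submodule.span ℂ (w '' {i | P i})) :
    ∃ c : ι → ℂ, x = ∑ i, if P i then c i * w i else 0 := by
  induction hx using Submodule.span_induction with
  | mem z hz =>
    obtain ⟨i, hi, rfl⟩ := hz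
    refine ⟨fun j => if j = i then 1 else 0, ?_⟩
    rw [Finset.sum_eq_single i]
    · simp [Set.mem_setOf_eq.mp hi]
    · intro j _ hj
      simp [hj]
    · simp
  | zero => exact ⟨0, by simp⟩
  | add a b _ _ ha hb =>
    obtain ⟨ca, rfl⟩ := ha
    obtain ⟨cb, rfl⟩ := hb
    refine ⟨ca + cb, ?_⟩
    rw [← Finset.sum_add_distrib]
    refine Finset.sum_congr rfl fun i _ => ?_
    split_ifs <;> simp <;> ring
  | smul t a _ ha =>
    obtain ⟨ca, rfl⟩ := ha
    refine ⟨fun i => t * ca i, ?_⟩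
    rw [smul_eq_mul, Finset.mul_sum]
    refine Finset.sum_congr rfl fun i _ => ?_
    split_ifs <;> simp <;> ring

lemma Ival_mem_span (D : S → ℂ) (B : Matrix S S ℂ) (n : S) (r : ℕ) (m : S) :
    Ival D B n r m ∈ Submodule.span ℂ (pw B '' PathSet n r m) := by
  refine Submodule.sum_mem _ fun γ _ => ?_
  split_ifs with h
  · rw [← smul_eq_mul]
    exact Submodule.smul_mem _ _ (Submodule.subset_span ⟨γ, ⟨h.1, h.2.1⟩, rfl⟩)
  · exact Submodule.zero_mem _
lemma Ival_one (D : S → ℂ) (B : Matrix S S ℂ) (n : S) (m : S) (hm : m ≠ n) :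
    Ival D B n 1 m = (D n - D m)⁻¹ * B m n := by
  have hirr : ∀ j : Fin 2, j ≠ Fin.last 1 → (![m, n] : Fin 2 → S) j ≠ n := by
    intro j hj
    fin_cases j
    · simpa using hm
    · exact absurd rfl hj
  rw [Ival, Finset.sum_eq_single (![m, n] : Fin 2 → S)]
  · rw [if_pos ⟨rfl, rfl, hirr⟩]
    show gI D n ![m, n] * pw B ![m, n] = _
    rw [gI, pw, Fin.prod_univ_two, Fin.prod_univ_one]
    have h01 : (0 : Fin 2) ≠ Fin.last 1 := by decide
    have h11 : ¬ ((1 : Fin 2) ≠ Fin.last 1) := by decide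
    rw [if_pos h01, if_neg h11]
    show (D n - D (![m, n] 0))⁻¹ * 1 * B (![m, n] 0) (![m, n] 1) = _
    simp
  · intro γ _ hγ
    rw [if_neg]
    rintro ⟨h0, h1, -⟩
    refine hγ (funext fun j => ?_)
    fin_cases j
    · simpa using h0
    · simpa using h1
  · intro h
    exact absurd (Finset.mem_univ _) h

lemma Ival_succ (D : S → ℂ) (B : Matrix S S ℂ) (n : S) (k : ℕ) (hk : 1 ≤ k) (m : S)
    (hm : m ≠ n) :
    Ival D B n (k + 1) m
      = (D n - D m)⁻¹ * ∑ ℓ ∈ Finset.univ.erase n, B m ℓ * Ival D B n k ℓ := by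
  have h0last : (0 : Fin (k + 1)) ≠ Fin.last k := by
    intro h
    have := congrArg Fin.val h
    simp [Fin.val_last] at this
    omega
  have h1 : ∀ x : S, (∑ δ : Fin (k + 1) → S,
      if (Fin.cons x δ : Fin (k + 1 + 1) → S) 0 = m ∧
          (Fin.cons x δ : Fin (k + 1 + 1) → S) (Fin.last (k + 1)) = n ∧
          (∀ j, j ≠ Fin.last (k + 1) → (Fin.cons x δ : Fin (k + 1 + 1) → S) j ≠ n) then
        gI D n (Fin.cons x δ : Fin (k + 1 + 1) → S) * pw B (Fin.cons x δ : Fin (k + 1 + 1) → S)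
      else 0)
      = if x = m then (∑ δ : Fin (k + 1) → S,
          if δ (Fin.last k) = n ∧ (∀ j, j ≠ Fin.last k → δ j ≠ n) then
            (D n - D m)⁻¹ * gI D n δ * (B m (δ 0) * pw B δ) else 0) else 0 := by
    intro x
    by_cases hxm : x = m
    · subst hxm
      rw [if_pos rfl]
      refine Finset.sum_congr rfl fun δ _ => ?_
      by_cases hq : δ (Fin.last k) = n ∧ ∀ j, j ≠ Fin.last k → δ j ≠ n
      · rw [if_pos ⟨Fin.cons_zero _ _, by rw [cons_last']; exact hq.1,
          (irr_cons_iff hm δ).mpr hq.2⟩, if_pos hq, gI_cons, pw_cons]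
      · rw [if_neg hq, if_neg]
        rintro ⟨-, hlast, hirr⟩
        exact hq ⟨by rwa [cons_last'] at hlast, (irr_cons_iff hm δ).mp hirr⟩
    · rw [if_neg hxm]
      refine Finset.sum_eq_zero fun δ _ => ?_
      rw [if_neg]
      rintro ⟨h0, -, -⟩
      rw [Fin.cons_zero] at h0
      exact hxm h0
  have h2 : ∀ ℓ : S, (D n - D m)⁻¹ * (B m ℓ * Ival D B n k ℓ)
      = ∑ δ : Fin (k + 1) → S,
          if δ 0 = ℓ ∧ δ (Fin.last k) = n ∧ (∀ j, j ≠ Fin.last k → δ j ≠ n) then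
            (D n - D m)⁻¹ * (B m ℓ * (gI D n δ * pw B δ)) else 0 := by
    intro ℓ
    rw [Ival, Finset.mul_sum, Finset.mul_sum]
    exact Finset.sum_congr rfl fun δ _ => by split_ifs <;> simp
  have hl : ∀ δ : Fin (k + 1) → S,
      (∑ ℓ ∈ Finset.univ.erase n,
        if δ 0 = ℓ ∧ δ (Fin.last k) = n ∧ (∀ j, j ≠ Fin.last k → δ j ≠ n) then
          (D n - D m)⁻¹ * (B m ℓ * (gI D n δ * pw B δ)) else 0)
      = if δ (Fin.last k) = n ∧ (∀ j, j ≠ Fin.last k → δ j ≠ n) then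
          (D n - D m)⁻¹ * gI D n δ * (B m (δ 0) * pw B δ) else 0 := by
    intro δ
    by_cases hq : δ (Fin.last k) = n ∧ ∀ j, j ≠ Fin.last k → δ j ≠ n
    · have hδ0 : δ 0 ≠ n := hq.2 0 h0last
      rw [Finset.sum_eq_single (δ 0)]
      · rw [if_pos ⟨rfl, hq⟩, if_pos hq]
        ring
      · intro ℓ _ hℓδ
        rw [if_neg]
        rintro ⟨h, -⟩
        exact hℓδ h.symm
      · intro hnotmem
        exact absurd (Finset.mem_erase.mpr ⟨hδ0, Finset.mem_univ _⟩) hnotmem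
    · rw [if_neg hq]
      refine Finset.sum_eq_zero fun ℓ _ => ?_
      rw [if_neg]
      rintro ⟨-, ha, hb⟩
      exact hq ⟨ha, hb⟩
  calc Ival D B n (k + 1) m
      = ∑ x : S, ∑ δ : Fin (k + 1) → S,
          (if (Fin.cons x δ : Fin (k + 1 + 1) → S) 0 = m ∧
              (Fin.cons x δ : Fin (k + 1 + 1) → S) (Fin.last (k + 1)) = n ∧
              (∀ j, j ≠ Fin.last (k + 1) → (Fin.cons x δ : Fin (k + 1 + 1) → S) j ≠ n) then
            gI D n (Fin.cons x δ : Fin (k + 1 + 1) → S) *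
              pw B (Fin.cons x δ : Fin (k + 1 + 1) → S)
          else 0) := by
        rw [Ival]
        exact sum_cons_eq _
    _ = ∑ x : S, (if x = m then (∑ δ : Fin (k + 1) → S,
          if δ (Fin.last k) = n ∧ (∀ j, j ≠ Fin.last k → δ j ≠ n) then
            (D n - D m)⁻¹ * gI D n δ * (B m (δ 0) * pw B δ) else 0) else 0) :=
        Finset.sum_congr rfl fun x _ => h1 x
    _ = ∑ δ : Fin (k + 1) → S,
          if δ (Fin.last k) = n ∧ (∀ j, j ≠ Fin.last k → δ j ≠ n) then
            (D n - D m)⁻¹ * gI D n δ * (B m (δ 0) * pw B δ) else 0 := by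
        rw [Finset.sum_ite_eq' Finset.univ m]
        simp
    _ = ∑ δ : Fin (k + 1) → S, ∑ ℓ ∈ Finset.univ.erase n,
          (if δ 0 = ℓ ∧ δ (Fin.last k) = n ∧ (∀ j, j ≠ Fin.last k → δ j ≠ n) then
            (D n - D m)⁻¹ * (B m ℓ * (gI D n δ * pw B δ)) else 0) :=
        Finset.sum_congr rfl fun δ _ => (hl δ).symm
    _ = ∑ ℓ ∈ Finset.univ.erase n, ∑ δ : Fin (k + 1) → S,
          (if δ 0 = ℓ ∧ δ (Fin.last k) = n ∧ (∀ j, j ≠ Fin.last k → δ j ≠ n) then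
            (D n - D m)⁻¹ * (B m ℓ * (gI D n δ * pw B δ)) else 0) := Finset.sum_comm
    _ = ∑ ℓ ∈ Finset.univ.erase n, (D n - D m)⁻¹ * (B m ℓ * Ival D B n k ℓ) :=
        Finset.sum_congr rfl fun ℓ _ => (h2 ℓ).symm
    _ = (D n - D m)⁻¹ * ∑ ℓ ∈ Finset.univ.erase n, B m ℓ * Ival D B n k ℓ :=
        (Finset.mul_sum _ _ _).symm
lemma key (D : S → ℂ) (B : Matrix S S ℂ) (n : S) (η : ℕ → ℂ) (u : ℕ → S → ℂ)
    (hu1 : ∀ m, m ≠ n → u 1 m = B m n / (D n - D m))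
    (hηr : ∀ r, 2 ≤ r → η r = ∑ m ∈ Finset.univ.erase n, B n m * u (r - 1) m)
    (hur : ∀ r, 2 ≤ r → ∀ m, m ≠ n → u r m = (D n - D m)⁻¹ *
      ((∑ ℓ ∈ Finset.univ.erase n, B m ℓ * u (r - 1) ℓ)
        - ∑ s ∈ Finset.Icc 2 (r - 1), η s * u (r - s) m)) :
    ∀ r, 1 ≤ r → ∀ m, m ≠ n →
      u r m - Ival D B n r m ∈ Submodule.span ℂ (pw B '' NIrrSet n r m) := by
  intro r
  induction r using Nat.strong_induction_on with
  | _ r IH =>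
  intro hr m hm
  rcases Nat.lt_or_ge r 2 with h2 | h2
  · have hr1 : r = 1 := by omega
    subst hr1
    rw [hu1 m hm, Ival_one D B n m hm, div_eq_mul_inv,
      show B m n * (D n - D m)⁻¹ - (D n - D m)⁻¹ * B m n = 0 from by ring]
    exact Submodule.zero_mem _
  · obtain ⟨k, rfl⟩ : ∃ k, r = k + 2 := ⟨r - 2, by omega⟩
    have full : ∀ r', r' < k + 2 → 1 ≤ r' → ∀ ℓ, ℓ ≠ n →
        u r' ℓ ∈ Submodule.span ℂ (pw B '' PathSet n r' ℓ) := by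
      intro r' hlt hr' ℓ hℓ
      have h := IH r' hlt hr' ℓ hℓ
      rw [show u r' ℓ = Ival D B n r' ℓ + (u r' ℓ - Ival D B n r' ℓ) from by ring]
      exact Submodule.add_mem _ (Ival_mem_span D B n r' ℓ)
        (Submodule.span_mono (Set.image_mono (NIrrSet_subset_PathSet n r' ℓ)) h)
    have e2 : ∑ ℓ ∈ Finset.univ.erase n, B m ℓ * u (k + 1) ℓ
        = (∑ ℓ ∈ Finset.univ.erase n, B m ℓ * Ival D B n (k + 1) ℓ)
          + ∑ ℓ ∈ Finset.univ.erase n, B m ℓ * (u (k + 1) ℓ - Ival D B n (k + 1) ℓ) := by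
      rw [← Finset.sum_add_distrib]
      exact Finset.sum_congr rfl fun ℓ _ => by ring
    have hdecomp : u (k + 2) m - Ival D B n (k + 2) m
        = (D n - D m)⁻¹ * (∑ ℓ ∈ Finset.univ.erase n,
            B m ℓ * (u (k + 1) ℓ - Ival D B n (k + 1) ℓ))
          - (D n - D m)⁻¹ * ∑ s ∈ Finset.Icc 2 (k + 1), η s * u (k + 2 - s) m := by
      rw [hur (k + 2) (by omega) m hm, show k + 2 - 1 = k + 1 from rfl,
        show k + 2 = k + 1 + 1 from rfl, Ival_succ D B n (k + 1) (by omega) m hm, e2]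
      ring
    rw [hdecomp]
    refine Submodule.sub_mem _ ?_ ?_
    · rw [← smul_eq_mul]
      refine Submodule.smul_mem _ _ (Submodule.sum_mem _ fun ℓ hℓ => ?_)
      have hℓn : ℓ ≠ n := (Finset.mem_erase.mp hℓ).1
      have hmem := IH (k + 1) (by omega) (by omega) ℓ hℓn
      have h3 := edge_mul_mem_span B m ℓ (P := NIrrSet n (k + 1) ℓ) hmem (fun δ hδ => hδ.1)
      refine Submodule.span_mono (Set.image_mono ?_) h3
      rintro γ ⟨δ, hδ, rfl⟩
      obtain ⟨hδ0, hδlast, j, hj, hjn⟩ := hδ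
      refine ⟨Fin.cons_zero _ _, ?_, j.succ, ?_, ?_⟩
      · show (Fin.cons m δ : Fin (k + 1 + 2) → S) (Fin.last (k + 1 + 1)) = n
        rw [cons_last']; exact hδlast
      · rw [← Fin.succ_last]
        exact (Fin.succ_injective _).ne hj
      · show (Fin.cons m δ : Fin (k + 1 + 2) → S) j.succ = n
        rw [Fin.cons_succ]; exact hjn
    · rw [← smul_eq_mul]
      refine Submodule.smul_mem _ _ (Submodule.sum_mem _ fun s hs => ?_)
      rw [Finset.mem_Icc] at hs
      obtain ⟨t, rfl⟩ : ∃ t, s = t + 2 := ⟨s - 2, by omega⟩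
      have hη : η (t + 2) ∈ Submodule.span ℂ (pw B '' PathSet n (t + 2) n) := by
        rw [hηr (t + 2) (by omega), show t + 2 - 1 = t + 1 from rfl]
        refine Submodule.sum_mem _ fun ℓ hℓ => ?_
        have hℓn : ℓ ≠ n := (Finset.mem_erase.mp hℓ).1
        have hmem := full (t + 1) (by omega) (by omega) ℓ hℓn
        have h3 := edge_mul_mem_span B n ℓ (P := PathSet n (t + 1) ℓ) hmem (fun δ hδ => hδ.1)
        refine Submodule.span_mono (Set.image_mono ?_) h3
        rintro γ ⟨δ, hδ, rfl⟩
        refine ⟨Fin.cons_zero _ _, ?_⟩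
        show (Fin.cons n δ : Fin (t + 1 + 2) → S) (Fin.last (t + 1 + 1)) = n
        rw [cons_last']; exact hδ.2
      set a := k - t with ha
      have hsub : k + 2 - (t + 2) = a := by omega
      have hsum : a + (t + 2) = k + 2 := by omega
      have hu' : u a m ∈ Submodule.span ℂ (pw B '' PathSet n a m) :=
        full a (by omega) (by omega) m hm
      have hmul := mul_mem_span_mul hη hu'
      rw [hsub, ← hsum]
      refine Submodule.span_mono ?_ hmul
      rintro z ⟨p, ⟨δ, hδ, rfl⟩, q, ⟨ε, hε, rfl⟩, rfl⟩
      have hc : ε (Fin.last a) = δ 0 := by rw [hε.2, hδ.1]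
      refine ⟨glue ε δ, ⟨?_, ?_, ?_⟩, ?_⟩
      · rw [glue_zero, hε.1]
      · rw [glue_last ε δ (by omega), hδ.2]
      · exact ⟨((a : ℕ) : Fin (a + (t + 2) + 1)), mid_ne_last (by omega),
          by rw [glue_mid, hε.2]⟩
      · rw [pw_glue B ε δ hc, mul_comm]
end RSPE

/-- Rayleigh–Schrödinger path expansion: for `r ≥ 1` and `m ≠ n`, the eigenvector
coefficient `(u_n^{(r)})_m` is a sum over paths of length `r` from `m` to `n` of
`g(γ, D) B_γ`, where for an irreducible path `γ = (n_0, …, n_r)` one has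
`g(γ, D) = ∏_{j=0}^{r-1} (D_n - D_{n_j})⁻¹`. -/
theorem u_path_expansion {S : Type*} [Fintype S] [DecidableEq S] [Nonempty S]
    (D : S → ℂ) (hD : Function.Injective D)
    (B : Matrix S S ℂ) (hB : ∀ m, B m m = 0)
    (n : S) (η : ℕ → ℂ) (u : ℕ → S → ℂ)
    (hη0 : η 0 = D n) (hη1 : η 1 = 0) (hu0 : u 0 = Pi.single n 1)
    (hun : ∀ r, 1 ≤ r → u r n = 0)
    (hu1 : ∀ m, m ≠ n → u 1 m = B m n / (D n - D m))
    (hηr : ∀ r, 2 ≤ r → η r = ∑ m ∈ Finset.univ.erase n, B n m * u (r - 1) m)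
    (hur : ∀ r, 2 ≤ r → ∀ m, m ≠ n → u r m = (D n - D m)⁻¹ *
      ((∑ ℓ ∈ Finset.univ.erase n, B m ℓ * u (r - 1) ℓ)
        - ∑ s ∈ Finset.Icc 2 (r - 1), η s * u (r - s) m)) :
    ∀ r : ℕ, 1 ≤ r → ∀ m : S, m ≠ n → ∃ g : (Fin (r + 1) → S) → ℂ,
      (u r m = ∑ γ : Fin (r + 1) → S,
        if γ 0 = m ∧ γ (Fin.last r) = n then
          g γ * ∏ i : Fin r, B (γ i.castSucc) (γ i.succ)
        else 0) ∧
      (∀ γ : Fin (r + 1) → S, γ 0 = m → γ (Fin.last r) = n →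
        (∀ j : Fin (r + 1), j ≠ Fin.last r → γ j ≠ n) →
        g γ = ∏ j : Fin (r + 1),
          if j ≠ Fin.last r then (D n - D (γ j))⁻¹ else 1) := by
  intro r hr m hm
  have hkey := RSPE.key D B n η u hu1 hηr hur r hr m hm
  have hkey' : u r m - RSPE.Ival D B n r m ∈ Submodule.span ℂ
      (RSPE.pw B '' {γ : Fin (r + 1) → S |
        γ 0 = m ∧ γ (Fin.last r) = n ∧ ∃ j, j ≠ Fin.last r ∧ γ j = n}) := hkey
  obtain ⟨c, hc⟩ := RSPE.span_coeff (RSPE.pw B)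
    (fun γ : Fin (r + 1) → S =>
      γ 0 = m ∧ γ (Fin.last r) = n ∧ ∃ j, j ≠ Fin.last r ∧ γ j = n) hkey'
  have hterm : ∀ γ : Fin (r + 1) → S,
      (if γ 0 = m ∧ γ (Fin.last r) = n then
        (if ∀ j : Fin (r + 1), j ≠ Fin.last r → γ j ≠ n then RSPE.gI D n γ else c γ) *
          ∏ i : Fin r, B (γ i.castSucc) (γ i.succ)
      else 0)
      = (if γ 0 = m ∧ γ (Fin.last r) = n ∧ ∀ j, j ≠ Fin.last r → γ j ≠ n then
          RSPE.gI D n γ * RSPE.pw B γ else 0)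
        + (if γ 0 = m ∧ γ (Fin.last r) = n ∧ ∃ j, j ≠ Fin.last r ∧ γ j = n then
          c γ * RSPE.pw B γ else 0) := by
    intro γ
    by_cases hp : γ 0 = m ∧ γ (Fin.last r) = n
    · by_cases hi : ∀ j : Fin (r + 1), j ≠ Fin.last r → γ j ≠ n
      · have hn : ¬(γ 0 = m ∧ γ (Fin.last r) = n ∧ ∃ j, j ≠ Fin.last r ∧ γ j = n) := by
          rintro ⟨-, -, j, hj, hjn⟩
          exact hi j hj hjn
        rw [if_pos hp, if_pos hi, if_pos ⟨hp.1, hp.2, hi⟩, if_neg hn, add_zero]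
        rfl
      · have he : ∃ j, j ≠ Fin.last r ∧ γ j = n := by
          push_neg at hi
          obtain ⟨j, hj, hjn⟩ := hi
          exact ⟨j, hj, hjn⟩
        have hn : ¬(γ 0 = m ∧ γ (Fin.last r) = n ∧ ∀ j, j ≠ Fin.last r → γ j ≠ n) :=
          fun h => hi h.2.2
        rw [if_pos hp, if_neg hi, if_neg hn, if_pos ⟨hp.1, hp.2, he⟩, zero_add]
        rfl
    · have hn1 : ¬(γ 0 = m ∧ γ (Fin.last r) = n ∧ ∀ j, j ≠ Fin.last r → γ j ≠ n) :=
        fun h => hp ⟨h.1, h.2.1⟩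
      have hn2 : ¬(γ 0 = m ∧ γ (Fin.last r) = n ∧ ∃ j, j ≠ Fin.last r ∧ γ j = n) :=
        fun h => hp ⟨h.1, h.2.1⟩
      rw [if_neg hp, if_neg hn1, if_neg hn2, add_zero]
  refine ⟨fun γ => if ∀ j : Fin (r + 1), j ≠ Fin.last r → γ j ≠ n then RSPE.gI D n γ
    else c γ, ?_, ?_⟩
  · show u r m = ∑ γ : Fin (r + 1) → S,
      if γ 0 = m ∧ γ (Fin.last r) = n then
        (if ∀ j : Fin (r + 1), j ≠ Fin.last r → γ j ≠ n then RSPE.gI D n γ else c γ) *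
          ∏ i : Fin r, B (γ i.castSucc) (γ i.succ)
      else 0
    have hfinal : (∑ γ : Fin (r + 1) → S,
        if γ 0 = m ∧ γ (Fin.last r) = n then
          (if ∀ j : Fin (r + 1), j ≠ Fin.last r → γ j ≠ n then RSPE.gI D n γ else c γ) *
            ∏ i : Fin r, B (γ i.castSucc) (γ i.succ)
        else 0)
        = RSPE.Ival D B n r m + (u r m - RSPE.Ival D B n r m) := by
      rw [Finset.sum_congr rfl fun γ _ => hterm γ, Finset.sum_add_distrib]
      exact congrArg₂ (· + ·) rfl hc.symm
    rw [hfinal]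
    ring
  · intro γ h0 h1 hirr
    show (if ∀ j : Fin (r + 1), j ≠ Fin.last r → γ j ≠ n then RSPE.gI D n γ else c γ) = _
    rw [if_pos hirr]
    rfl
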